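/- Let w₀ denote the longest element of W and fix w ∈ W. Then: (1) for every v ∈ W, the element v·(v⁻¹ * w) satisfies v·(v⁻¹ * w) ≤ w, so the assignment g_w(v) := v·(v⁻¹ * w) defines a map g_w : W → {q ∈ W : q ≤ w}; and (2) if v ≤ w, then g_w(v w₀) = v. -/

import Mathlib

open scoped Classical

/-- Data of a root system with a fixed choice of simple roots: an ambient
`ℚ`-vector space `V`, a set of roots `Φ` with a distinguished subset `pos` of
positive roots, a coroot functional `coroot β = ⟨·, β^∨⟩` for each root, and
simple roots `α 1, …, α r`. -/
structure RootData where
  r : ℕ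
  V : Type
  [grp : AddCommGroup V]
  [mod : Module ℚ V]
  Φ : Set V
  pos : Set V
  coroot : V → Module.Dual ℚ V
  α : Fin r → V

attribute [instance] RootData.grp RootData.mod

namespace RootData

variable (R : RootData)

/-- The group of linear automorphisms of `V`, in which the Weyl group lives. -/
abbrev Aut : Type := R.V ≃ₗ[ℚ] R.V

/-- The linear map `v ↦ v - ⟨v, β^∨⟩ β`. -/
noncomputable def reflMap (β : R.V) : R.V →ₗ[ℚ] R.V :=
  LinearMap.id - (R.coroot β).smulRight β

/-- The reflection `s_β` associated to a root `β`, as a linear automorphism. -/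
noncomputable def s (β : R.V) : R.Aut :=
  if h : (R.reflMap β).comp (R.reflMap β) = LinearMap.id then
    LinearEquiv.ofLinear (R.reflMap β) (R.reflMap β) h h
  else LinearEquiv.refl ℚ R.V

/-- The simple reflections `s_i := s_{α_i}`. -/
noncomputable def S (i : Fin R.r) : R.Aut := R.s (R.α i)

/-- The Weyl group `W`, generated by the simple reflections. -/
noncomputable def weylGroup : Subgroup R.Aut := Subgroup.closure (Set.range R.S)

/-- The product `s_{i_1} ⋯ s_{i_k}` of a word in the simple reflections. -/
noncomputable def wordProd (l : List (Fin R.r)) : R.Aut := (l.map R.S).prod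

/-- The length function on `W`: least length of a word in the simple
reflections expressing the given element. -/
noncomputable def len (w : R.Aut) : ℕ :=
  sInf {n | ∃ l : List (Fin R.r), l.length = n ∧ R.wordProd l = w}

/-- A word is reduced if its length equals the length of its product. -/
def Reduced (l : List (Fin R.r)) : Prop := R.len (R.wordProd l) = l.length

/-- The Bruhat order on `W`: `u ≤ w` iff some reduced word for `w` has a
subword whose product is `u`. -/
def BruhatLE (u w : R.Aut) : Prop :=
  ∃ l : List (Fin R.r), R.Reduced l ∧ R.wordProd l = w ∧
    ∃ l' : List (Fin R.r), l'.Sublist l ∧ R.wordProd l' = u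

/-- Strict Bruhat order. -/
def BruhatLT (u w : R.Aut) : Prop := R.BruhatLE u w ∧ u ≠ w

/-- One step of the Demazure product: `s_i * w := max {w, s_i w}`. -/
noncomputable def dmulStep (i : Fin R.r) (x : R.Aut) : R.Aut :=
  if R.len x < R.len (R.S i * x) then R.S i * x else x

/-- Demazure product of a word in the simple reflections against `w`:
`s_{i_1} * (s_{i_2} * (⋯ * (s_{i_k} * w)))`. -/
noncomputable def dmulList (l : List (Fin R.r)) (w : R.Aut) : R.Aut :=
  l.foldr R.dmulStep w

/-- The Demazure product `v * w` on the Weyl group, computed by choosing a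
reduced word for `v` (it is independent of this choice). -/
noncomputable def dmul (v w : R.Aut) : R.Aut :=
  if h : ∃ l : List (Fin R.r), R.Reduced l ∧ R.wordProd l = v then
    R.dmulList h.choose w
  else v * w

/-- The parabolic subgroup `W_{P_i}` generated by the simple reflections
`s_j`, `j ≠ i`. -/
noncomputable def WPar (i : Fin R.r) : Subgroup R.Aut :=
  Subgroup.closure (R.S '' {j | j ≠ i})

/-- `W^{P_i}`: the set of minimal-length representatives of cosets of
`W/W_{P_i}`. -/
def minReps (i : Fin R.r) : Set R.Aut :=
  {v | v ∈ R.weylGroup ∧ ∀ p ∈ R.WPar i, R.len v ≤ R.len (v * p)}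

/-- `u` is the minimal-length representative of the coset `w W_{P_i}`. -/
def IsMinRep (i : Fin R.r) (u w : R.Aut) : Prop :=
  u ∈ R.minReps i ∧ u⁻¹ * w ∈ R.WPar i

/-- A weight is dominant if it pairs nonnegatively with every simple coroot. -/
def Dominant (lam : R.V) : Prop := ∀ i : Fin R.r, 0 ≤ R.coroot (R.α i) lam

/-- The dual action of the Weyl group on `V* `: `(u f)(v) = f(u⁻¹ v)`. -/
noncomputable def dualAct (u : R.Aut) (f : Module.Dual ℚ R.V) : Module.Dual ℚ R.V :=
  f.comp (u.symm : R.V →ₗ[ℚ] R.V)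

/-- The Demazure polytope `P_λ^w := conv {uλ : u ∈ W, u ≤ w}`. -/
noncomputable def demPolytope (lam : R.V) (w : R.Aut) : Set R.V :=
  convexHull ℚ {m | ∃ u : R.Aut, u ∈ R.weylGroup ∧ R.BruhatLE u w ∧ m = u lam}

/-- Membership in the weight lattice `X`. -/
def IsWeight (lam : R.V) : Prop := ∀ β ∈ R.Φ, ∃ m : ℤ, R.coroot β lam = (m : ℚ)

/-- The root lattice `Q = ℤΦ`. -/
noncomputable def rootLattice : AddSubgroup R.V := AddSubgroup.closure R.Φ

/-- `w₀` is the longest element of the Weyl group. -/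
def IsLongest (w₀ : R.Aut) : Prop :=
  w₀ ∈ R.weylGroup ∧ ∀ g ∈ R.weylGroup, R.len g ≤ R.len w₀

/-- The positive roots `Φ_{P_i}⁺ = Φ⁺ ∩ span {α_j : j ≠ i}` of the standard
Levi subsystem. -/
def parPos (i : Fin R.r) : Set R.V :=
  {η | η ∈ R.pos ∧ η ∈ Submodule.span ℚ (R.α '' {j | j ≠ i})}

/-- The value `D_i (e^λ)` of the Demazure operator on a basis element of the
group ring `ℤ[X]`. -/
noncomputable def demOnBasis (i : Fin R.r) (lam : R.V) : R.V →₀ ℤ :=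
  if 0 ≤ ⌊R.coroot (R.α i) lam⌋ then
    ∑ k ∈ Finset.range (⌊R.coroot (R.α i) lam⌋.toNat + 1),
      Finsupp.single (lam - (k : ℚ) • R.α i) 1
  else if ⌊R.coroot (R.α i) lam⌋ = -1 then 0
  else - ∑ k ∈ Finset.range ((-⌊R.coroot (R.α i) lam⌋).toNat - 1),
      Finsupp.single (lam + ((k : ℚ) + 1) • R.α i) 1

/-- The Demazure operator `D_i`, as a `ℤ`-linear endomorphism of the group
ring `ℤ[X]` (realized as finitely supported functions `V →₀ ℤ`). -/
noncomputable def demOp (i : Fin R.r) : (R.V →₀ ℤ) →ₗ[ℤ] (R.V →₀ ℤ) :=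
  Finsupp.lsum ℤ fun lam => LinearMap.toSpanSingleton ℤ (R.V →₀ ℤ) (R.demOnBasis i lam)

/-- The Demazure character `D_{i_1} ⋯ D_{i_k} (e^λ)`. -/
noncomputable def demChar (l : List (Fin R.r)) (lam : R.V) : R.V →₀ ℤ :=
  l.foldr (fun i p => R.demOp i p) (Finsupp.single lam 1)

/-- The axioms of a finite crystallographic root system spanning `V`, with
simple roots `α_i` and positive roots `pos`. -/
structure IsRootSystem (R : RootData) : Prop where
  finite : R.Φ.Finite
  span_top : Submodule.span ℚ R.Φ = ⊤
  ne_zero : ∀ β ∈ R.Φ, β ≠ 0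
  coroot_self : ∀ β ∈ R.Φ, R.coroot β β = 2
  crystallographic : ∀ β ∈ R.Φ, ∀ γ ∈ R.Φ, ∃ m : ℤ, R.coroot β γ = (m : ℚ)
  reflection_stable : ∀ β ∈ R.Φ, ∀ γ ∈ R.Φ, γ - R.coroot β γ • β ∈ R.Φ
  simple_mem : ∀ i, R.α i ∈ R.Φ
  indep : LinearIndependent ℚ R.α
  pos_subset : R.pos ⊆ R.Φ
  pos_or_neg : ∀ β ∈ R.Φ, (β ∈ R.pos ∧ -β ∉ R.pos) ∨ (β ∉ R.pos ∧ -β ∈ R.pos)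
  simple_pos : ∀ i, R.α i ∈ R.pos
  pos_nonneg_comb : ∀ β ∈ R.pos, ∃ c : Fin R.r → ℚ, (∀ i, 0 ≤ c i) ∧ β = ∑ i, c i • R.α i

end RootData

namespace RootData

open Set List

variable {R : RootData}

/-! ### Basic algebra -/

lemma mul_apply (x y : R.Aut) (v : R.V) : (x * y) v = x (y v) := rfl

lemma one_apply' (v : R.V) : (1 : R.Aut) v = v := rfl

lemma inv_apply_apply' (x : R.Aut) (v : R.V) : x⁻¹ (x v) = v := x.symm_apply_apply v

lemma apply_inv_apply' (x : R.Aut) (v : R.V) : x (x⁻¹ v) = v := x.apply_symm_apply v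

lemma coroot_simple_self (hR : R.IsRootSystem) (i : Fin R.r) :
    R.coroot (R.α i) (R.α i) = 2 := hR.coroot_self _ (hR.simple_mem i)

lemma reflMap_apply (β v : R.V) : R.reflMap β v = v - R.coroot β v • β := by
  simp [reflMap, LinearMap.smulRight]

lemma reflMap_invol {β : R.V} (hb : R.coroot β β = 2) :
    (R.reflMap β).comp (R.reflMap β) = LinearMap.id := by
  ext v
  simp only [LinearMap.comp_apply, reflMap_apply, LinearMap.id_coe, id_eq, map_sub, map_smul,
    smul_eq_mul, hb]
  module

lemma s_apply {β : R.V} (hb : R.coroot β β = 2) (v : R.V) :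
    R.s β v = v - R.coroot β v • β := by
  rw [RootData.s, dif_pos (reflMap_invol hb)]
  show R.reflMap β v = _
  exact reflMap_apply β v

lemma S_apply (hR : R.IsRootSystem) (i : Fin R.r) (v : R.V) :
    R.S i v = v - R.coroot (R.α i) v • R.α i := s_apply (coroot_simple_self hR i) v

/-- An automorphism of "reflection form" with `f β = 2` is an involution. -/
lemma invol_of_form {t : R.Aut} {β : R.V} {f : Module.Dual ℚ R.V}
    (h : ∀ v, t v = v - f v • β) (hf : f β = 2) : t * t = 1 := by
  apply LinearEquiv.toLinearMap_injective
  apply LinearMap.ext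
  intro v
  show t (t v) = v
  rw [h, h, map_sub, map_smul, smul_eq_mul, hf]
  module

lemma S_mul_self (hR : R.IsRootSystem) (i : Fin R.r) : R.S i * R.S i = 1 :=
  invol_of_form (S_apply hR i) (coroot_simple_self hR i)

lemma S_inv (hR : R.IsRootSystem) (i : Fin R.r) : (R.S i)⁻¹ = R.S i :=
  inv_eq_of_mul_eq_one_right (S_mul_self hR i)

lemma S_mem (i : Fin R.r) : R.S i ∈ R.weylGroup :=
  Subgroup.subset_closure ⟨i, rfl⟩

/-! ### Words -/

lemma wordProd_nil : R.wordProd [] = 1 := rfl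

lemma wordProd_cons (i : Fin R.r) (l : List (Fin R.r)) :
    R.wordProd (i :: l) = R.S i * R.wordProd l := by
  simp [wordProd]

lemma wordProd_append (l m : List (Fin R.r)) :
    R.wordProd (l ++ m) = R.wordProd l * R.wordProd m := by
  simp [wordProd]

lemma wordProd_singleton (i : Fin R.r) : R.wordProd [i] = R.S i := by
  simp [wordProd]

lemma wordProd_concat (l : List (Fin R.r)) (i : Fin R.r) :
    R.wordProd (l ++ [i]) = R.wordProd l * R.S i := by
  simp [wordProd]

lemma wordProd_mem (l : List (Fin R.r)) : R.wordProd l ∈ R.weylGroup := by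
  induction l with
  | nil => exact one_mem _
  | cons i t ih => rw [wordProd_cons]; exact mul_mem (S_mem i) ih

lemma wordProd_reverse (hR : R.IsRootSystem) (l : List (Fin R.r)) :
    R.wordProd l.reverse = (R.wordProd l)⁻¹ := by
  induction l with
  | nil => simp [wordProd]
  | cons i t ih =>
    rw [reverse_cons, wordProd_concat, ih, wordProd_cons, mul_inv_rev, S_inv hR]

/-! ### Length -/

lemma len_le {x : R.Aut} {l : List (Fin R.r)} (h : R.wordProd l = x) :
    R.len x ≤ l.length := Nat.sInf_le ⟨l, rfl, h⟩

lemma exists_word (hR : R.IsRootSystem) {x : R.Aut} (hx : x ∈ R.weylGroup) :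
    ∃ l, R.wordProd l = x := by
  induction hx using Subgroup.closure_induction with
  | mem x hx => obtain ⟨i, rfl⟩ := hx; exact ⟨[i], wordProd_singleton i⟩
  | one => exact ⟨[], rfl⟩
  | mul x y _ _ hx hy =>
    obtain ⟨l, hl⟩ := hx; obtain ⟨m, hm⟩ := hy
    exact ⟨l ++ m, by rw [wordProd_append, hl, hm]⟩
  | inv x _ hx =>
    obtain ⟨l, hl⟩ := hx
    exact ⟨l.reverse, by rw [wordProd_reverse hR, hl]⟩

lemma exists_reduced (hR : R.IsRootSystem) {x : R.Aut} (hx : x ∈ R.weylGroup) :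
    ∃ l, R.Reduced l ∧ R.wordProd l = x ∧ l.length = R.len x := by
  obtain ⟨l₀, hl₀⟩ := exists_word hR hx
  have hne : {n | ∃ l : List (Fin R.r), l.length = n ∧ R.wordProd l = x}.Nonempty :=
    ⟨l₀.length, l₀, rfl, hl₀⟩
  obtain ⟨l, hlen, hprod⟩ := Nat.sInf_mem hne
  refine ⟨l, ?_, hprod, hlen⟩
  show R.len (R.wordProd l) = l.length
  rw [hprod, hlen]; rfl

lemma len_one : R.len (1 : R.Aut) = 0 :=
  Nat.le_zero.mp (len_le wordProd_nil)

lemma len_mul_le (hR : R.IsRootSystem) {x y : R.Aut} (hx : x ∈ R.weylGroup)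
    (hy : y ∈ R.weylGroup) : R.len (x * y) ≤ R.len x + R.len y := by
  obtain ⟨l, _, hl, hll⟩ := exists_reduced hR hx
  obtain ⟨m, _, hm, hml⟩ := exists_reduced hR hy
  calc R.len (x * y) ≤ (l ++ m).length := len_le (by rw [wordProd_append, hl, hm])
  _ = _ := by rw [List.length_append, hll, hml]

lemma len_inv (hR : R.IsRootSystem) {x : R.Aut} (hx : x ∈ R.weylGroup) :
    R.len x⁻¹ = R.len x := by
  have key : ∀ y : R.Aut, y ∈ R.weylGroup → R.len y⁻¹ ≤ R.len y := by
    intro y hy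
    obtain ⟨l, _, hl, hll⟩ := exists_reduced hR hy
    calc R.len y⁻¹ ≤ l.reverse.length := len_le (by rw [wordProd_reverse hR, hl])
    _ = R.len y := by rw [List.length_reverse, hll]
  refine le_antisymm (key x hx) ?_
  have := key x⁻¹ (inv_mem hx)
  rwa [inv_inv] at this

lemma len_S_mul_le (hR : R.IsRootSystem) {x : R.Aut} (hx : x ∈ R.weylGroup) (i : Fin R.r) :
    R.len (R.S i * x) ≤ R.len x + 1 := by
  have := len_mul_le hR (S_mem i) hx
  have h1 : R.len (R.S i) ≤ 1 := len_le (wordProd_singleton i)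
  omega

lemma len_le_S_mul (hR : R.IsRootSystem) {x : R.Aut} (hx : x ∈ R.weylGroup) (i : Fin R.r) :
    R.len x ≤ R.len (R.S i * x) + 1 := by
  have := len_S_mul_le hR (mul_mem (S_mem i) hx) i
  rwa [← mul_assoc, S_mul_self hR, one_mul] at this

lemma len_eq_zero (hR : R.IsRootSystem) {x : R.Aut} (hx : x ∈ R.weylGroup)
    (h : R.len x = 0) : x = 1 := by
  obtain ⟨l, _, hl, hll⟩ := exists_reduced hR hx
  rw [h, List.length_eq_zero_iff] at hll
  rw [← hl, hll]; rfl

lemma reduced_cons (hR : R.IsRootSystem) {i : Fin R.r} {t : List (Fin R.r)}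
    (h : R.Reduced (i :: t)) :
    R.Reduced t ∧ R.len (R.wordProd (i :: t)) = R.len (R.wordProd t) + 1 := by
  have h1 : R.len (R.wordProd (i :: t)) = t.length + 1 := by
    have := h; rwa [Reduced, List.length_cons] at this
  have h2 : R.len (R.wordProd t) ≤ t.length := len_le rfl
  have h3 : R.len (R.wordProd (i :: t)) ≤ R.len (R.wordProd t) + 1 := by
    rw [wordProd_cons]; exact len_S_mul_le hR (wordProd_mem t) i
  constructor
  · show R.len (R.wordProd t) = t.length
    omega
  · omega

lemma reduced_concat (hR : R.IsRootSystem) {i : Fin R.r} {t : List (Fin R.r)}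
    (h : R.Reduced (t ++ [i])) :
    R.Reduced t ∧ R.len (R.wordProd (t ++ [i])) = R.len (R.wordProd t) + 1 := by
  have h1 : R.len (R.wordProd (t ++ [i])) = t.length + 1 := by
    have := h; rwa [Reduced, List.length_append, List.length_singleton] at this
  have h2 : R.len (R.wordProd t) ≤ t.length := len_le rfl
  have h3 : R.len (R.wordProd (t ++ [i])) ≤ R.len (R.wordProd t) + 1 := by
    rw [wordProd_concat]
    calc R.len (R.wordProd t * R.S i) ≤ R.len (R.wordProd t) + R.len (R.S i) :=
      len_mul_le hR (wordProd_mem t) (S_mem i)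
    _ ≤ _ := by have : R.len (R.S i) ≤ 1 := len_le (wordProd_singleton i); omega
  constructor
  · show R.len (R.wordProd t) = t.length
    omega
  · omega

/-! ### Geometry: action on roots -/

lemma mapsTo_roots (hR : R.IsRootSystem) {x : R.Aut} (hx : x ∈ R.weylGroup) :
    Set.MapsTo ⇑x R.Φ R.Φ ∧ Set.MapsTo ⇑x⁻¹ R.Φ R.Φ := by
  induction hx using Subgroup.closure_induction with
  | mem x hxx =>
    obtain ⟨i, rfl⟩ := hxx
    have key : Set.MapsTo ⇑(R.S i) R.Φ R.Φ := by
      intro γ hγ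
      rw [S_apply hR]
      exact hR.reflection_stable _ (hR.simple_mem i) _ hγ
    exact ⟨key, by rw [S_inv hR]; exact key⟩
  | one => exact ⟨fun γ hγ => hγ, by rw [inv_one]; exact fun γ hγ => hγ⟩
  | mul x y _ _ hx hy =>
    constructor
    · intro γ hγ; exact hx.1 (hy.1 hγ)
    · rw [mul_inv_rev]; intro γ hγ; exact hy.2 (hx.2 hγ)
  | inv x _ hx => exact ⟨hx.2, by rw [inv_inv]; exact hx.1⟩

lemma root_map (hR : R.IsRootSystem) {x : R.Aut} (hx : x ∈ R.weylGroup) {γ : R.V}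
    (hγ : γ ∈ R.Φ) : x γ ∈ R.Φ := (mapsTo_roots hR hx).1 hγ

lemma neg_mem_pos (hR : R.IsRootSystem) {γ : R.V} (hγ : γ ∈ R.Φ) (h : γ ∉ R.pos) :
    -γ ∈ R.pos := by
  rcases hR.pos_or_neg γ hγ with h' | h'
  · exact absurd h'.1 h
  · exact h'.2

lemma not_neg_mem_pos (hR : R.IsRootSystem) {γ : R.V} (hγ : γ ∈ R.Φ) (h : γ ∈ R.pos) :
    -γ ∉ R.pos := by
  rcases hR.pos_or_neg γ hγ with h' | h'
  · exact h'.2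
  · exact absurd h h'.1

/-- If `γ` is positive and `s_i γ` is not positive, then `γ` is a positive
multiple of the simple root `α i`. -/
lemma eq_smul_simple_of_S_neg (hR : R.IsRootSystem) {γ : R.V} {i : Fin R.r}
    (hγ : γ ∈ R.pos) (h : R.S i γ ∉ R.pos) : ∃ a : ℚ, 0 < a ∧ γ = a • R.α i := by
  classical
  obtain ⟨c, hc0, hcγ⟩ := hR.pos_nonneg_comb γ hγ
  set k : ℚ := R.coroot (R.α i) γ with hk
  have hγΦ : γ ∈ R.Φ := hR.pos_subset hγ
  have hsγ : R.S i γ = γ - k • R.α i := S_apply hR i γ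
  have hsΦ : R.S i γ ∈ R.Φ := by
    rw [hsγ]; exact hR.reflection_stable _ (hR.simple_mem i) _ hγΦ
  have hδ : -(R.S i γ) ∈ R.pos := neg_mem_pos hR hsΦ h
  obtain ⟨d, hd0, hdδ⟩ := hR.pos_nonneg_comb _ hδ
  -- linear relation
  have hrel : ∑ j, (c j + d j - if j = i then k else 0) • R.α j = 0 := by
    have expand : ∑ j, (c j + d j - if j = i then k else 0) • R.α j
        = (∑ j, c j • R.α j) + (∑ j, d j • R.α j)
          - ∑ j, (if j = i then k else 0) • R.α j := by
      rw [← Finset.sum_add_distrib, ← Finset.sum_sub_distrib]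
      congr 1; ext j
      rw [sub_smul, add_smul]
    rw [expand, ← hcγ, ← hdδ]
    have hite : ∑ j, (if j = i then k else 0) • R.α j = k • R.α i := by
      simp [ite_smul]
    rw [hite, hsγ]
    abel
  have hzero := Fintype.linearIndependent_iff.mp hR.indep _ hrel
  have hcj : ∀ j, j ≠ i → c j = 0 := by
    intro j hj
    have := hzero j
    rw [if_neg hj] at this
    have := hc0 j; have := hd0 j
    linarith
  have hγi : γ = c i • R.α i := by
    rw [hcγ]
    exact Finset.sum_eq_single i (fun b _ hb => by rw [hcj b hb, zero_smul])
      (fun hni => absurd (Finset.mem_univ i) hni)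
  refine ⟨c i, ?_, hγi⟩
  rcases lt_or_eq_of_le (hc0 i) with h' | h'
  · exact h'
  · exfalso
    rw [← h', zero_smul] at hγi
    exact hR.ne_zero γ hγΦ hγi

/-! ### Reflections -/

/-- `t` is a reflection along the positive root `β`. -/
def ReflAlong (R : RootData) (t : R.Aut) (β : R.V) : Prop :=
  β ∈ R.pos ∧ (∃ f : Module.Dual ℚ R.V, (∀ v, t v = v - f v • β) ∧ f β = 2) ∧
    Set.MapsTo ⇑t R.Φ R.Φ

lemma reflAlong_S (hR : R.IsRootSystem) (i : Fin R.r) : R.ReflAlong (R.S i) (R.α i) := by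
  refine ⟨hR.simple_pos i, ⟨R.coroot (R.α i), S_apply hR i, coroot_simple_self hR i⟩, ?_⟩
  intro γ hγ
  rw [S_apply hR]
  exact hR.reflection_stable _ (hR.simple_mem i) _ hγ

lemma ReflAlong.mul_self {t : R.Aut} {β : R.V} (h : R.ReflAlong t β) : t * t = 1 := by
  obtain ⟨_, ⟨f, hform, hf⟩, _⟩ := h
  exact invol_of_form hform hf

lemma ReflAlong.inv_eq {t : R.Aut} {β : R.V} (h : R.ReflAlong t β) : t⁻¹ = t :=
  inv_eq_of_mul_eq_one_right h.mul_self

lemma ReflAlong.apply_self {t : R.Aut} {β : R.V} (h : R.ReflAlong t β) : t β = -β := by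
  obtain ⟨_, ⟨f, hform, hf⟩, _⟩ := h
  rw [hform, hf]
  module

lemma reflAlong_conj_pos (hR : R.IsRootSystem) {x t : R.Aut} {β : R.V}
    (hx : x ∈ R.weylGroup) (ht : R.ReflAlong t β) (hp : x β ∈ R.pos) :
    R.ReflAlong (x * t * x⁻¹) (x β) := by
  obtain ⟨hβ, ⟨f, hform, hf⟩, hmap⟩ := ht
  refine ⟨hp, ⟨f ∘ₗ (x⁻¹ : R.Aut).toLinearMap, ?_, ?_⟩, ?_⟩
  · intro v
    show x (t (x⁻¹ v)) = _
    rw [hform, map_sub, map_smul, apply_inv_apply']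
    rfl
  · show f (x⁻¹ (x β)) = 2
    rw [inv_apply_apply', hf]
  · intro γ hγ
    show x (t (x⁻¹ γ)) ∈ R.Φ
    exact root_map hR hx (hmap ((mapsTo_roots hR hx).2 hγ))

lemma reflAlong_conj_neg (hR : R.IsRootSystem) {x t : R.Aut} {β : R.V}
    (hx : x ∈ R.weylGroup) (ht : R.ReflAlong t β) (hp : x β ∉ R.pos) :
    R.ReflAlong (x * t * x⁻¹) (-(x β)) := by
  obtain ⟨hβ, ⟨f, hform, hf⟩, hmap⟩ := ht
  have hxβΦ : x β ∈ R.Φ := root_map hR hx (hR.pos_subset hβ)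
  refine ⟨neg_mem_pos hR hxβΦ hp, ⟨-(f ∘ₗ (x⁻¹ : R.Aut).toLinearMap), ?_, ?_⟩, ?_⟩
  · intro v
    show x (t (x⁻¹ v)) = _
    rw [hform, map_sub, map_smul, apply_inv_apply']
    show v - f (x⁻¹ v) • x β = v - (-(f (x⁻¹ v))) • (-(x β))
    rw [neg_smul_neg]
  · show -(f (x⁻¹ (-(x β)))) = 2
    rw [map_neg, inv_apply_apply', map_neg, hf]
    norm_num
  · intro γ hγ
    show x (t (x⁻¹ γ)) ∈ R.Φ
    exact root_map hR hx (hmap ((mapsTo_roots hR hx).2 hγ))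

lemma exists_reflAlong_conj (hR : R.IsRootSystem) {x t : R.Aut} {β : R.V}
    (hx : x ∈ R.weylGroup) (ht : R.ReflAlong t β) :
    ∃ β', R.ReflAlong (x * t * x⁻¹) β' := by
  by_cases hp : x β ∈ R.pos
  · exact ⟨_, reflAlong_conj_pos hR hx ht hp⟩
  · exact ⟨_, reflAlong_conj_neg hR hx ht hp⟩

/-- Two reflections along parallel vectors that both preserve the (finite,
spanning) set of roots are equal. -/
lemma refl_eq_refl (hR : R.IsRootSystem) {t₁ t₂ : R.Aut} {β₂ : R.V}
    {f₁ f₂ : Module.Dual ℚ R.V} {a : ℚ} (ha : a ≠ 0) (hβ₂ : β₂ ≠ 0)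
    (h₁ : ∀ v, t₁ v = v - f₁ v • (a • β₂)) (hf₁ : f₁ (a • β₂) = 2)
    (h₂ : ∀ v, t₂ v = v - f₂ v • β₂) (hf₂ : f₂ β₂ = 2)
    (hm₁ : Set.MapsTo ⇑t₁ R.Φ R.Φ) (hm₂ : Set.MapsTo ⇑t₂ R.Φ R.Φ) : t₁ = t₂ := by
  classical
  set g : Module.Dual ℚ R.V := f₂ + a • (f₁ ∘ₗ t₂.toLinearMap) with hg
  set τ : R.Aut := t₁ * t₂ with hτdef
  have hgapp : ∀ v, g v = f₂ v + a * f₁ (t₂ v) := fun v => rfl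
  have hτ : ∀ v, τ v = v - g v • β₂ := by
    intro v
    show t₁ (t₂ v) = _
    rw [h₁, hgapp, h₂ v, smul_smul]
    module
  have hf₁β₂ : a * f₁ β₂ = 2 := by
    rw [← hf₁, map_smul, smul_eq_mul]
  have ht₁β₂ : t₁ β₂ = -β₂ := by
    rw [h₁, smul_smul]
    rw [show f₁ β₂ * a = 2 by rw [mul_comm]; exact hf₁β₂]
    module
  have ht₂β₂ : t₂ β₂ = -β₂ := by
    rw [h₂, hf₂]
    module
  have hτβ : τ β₂ = β₂ := by
    show t₁ (t₂ β₂) = β₂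
    rw [ht₂β₂, map_neg, ht₁β₂, neg_neg]
  have hgβ : g β₂ = 0 := by
    have := hτ β₂
    rw [hτβ] at this
    have h0 : g β₂ • β₂ = 0 := by
      have := sub_eq_self.mp this.symm
      exact this
    rcases smul_eq_zero.mp h0 with h | h
    · exact h
    · exact absurd h hβ₂
  have hτpowβ : ∀ n : ℕ, (τ ^ n) β₂ = β₂ := by
    intro n
    induction n with
    | zero => rfl
    | succ m ih => rw [pow_succ]; show (τ ^ m) (τ β₂) = β₂; rw [hτβ, ih]
  have hτpow : ∀ (n : ℕ) (v : R.V), (τ ^ n) v = v - ((n : ℚ) * g v) • β₂ := by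
    intro n
    induction n with
    | zero => intro v; simp
    | succ m ih =>
      intro v
      rw [pow_succ]
      show (τ ^ m) (τ v) = _
      rw [hτ v, map_sub, map_smul, ih, hτpowβ]
      push_cast
      module
  -- finite order of τ on Φ
  haveI : Finite ↥R.Φ := hR.finite.to_subtype
  have hτmap : Set.MapsTo ⇑τ R.Φ R.Φ := fun γ hγ => hm₁ (hm₂ hγ)
  let ψ : ↥R.Φ → ↥R.Φ := fun γ => ⟨τ γ, hτmap γ.2⟩
  have hinj : Function.Injective ψ := by
    intro u v huv
    have : τ u = τ v := congrArg Subtype.val huv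
    exact Subtype.ext (τ.injective this)
  let e : Equiv.Perm ↥R.Φ := Equiv.ofBijective ψ (Finite.injective_iff_bijective.mp hinj)
  have hn : 0 < orderOf e := orderOf_pos e
  have he : e ^ orderOf e = 1 := pow_orderOf_eq_one e
  have hrel : ∀ (m : ℕ) (γ : ↥R.Φ), (τ ^ m) (γ : R.V) = ((e ^ m) γ : R.V) := by
    intro m
    induction m with
    | zero => intro γ; rfl
    | succ k ih =>
      intro γ
      rw [pow_succ]
      show (τ ^ k) (τ γ) = (((e ^ k) * e) γ : R.V)
      rw [Equiv.Perm.mul_apply]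
      exact ih (e γ)
  have hfix : ∀ γ ∈ R.Φ, (τ ^ orderOf e) γ = γ := by
    intro γ hγ
    have := hrel (orderOf e) ⟨γ, hγ⟩
    rw [he] at this
    exact this
  have hgΦ : ∀ γ ∈ R.Φ, g γ = 0 := by
    intro γ hγ
    have h1 := hfix γ hγ
    rw [hτpow] at h1
    have h2 : (((orderOf e : ℕ) : ℚ) * g γ) • β₂ = 0 := by
      have := sub_eq_self.mp h1
      exact this
    rcases smul_eq_zero.mp h2 with h | h
    · rcases mul_eq_zero.mp h with h' | h'
      · exact absurd h' (Nat.cast_ne_zero.mpr hn.ne')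
      · exact h'
    · exact absurd h hβ₂
  have hg0 : g = 0 := LinearMap.ext_on hR.span_top (fun γ hγ => hgΦ γ hγ)
  have hτ1 : τ = 1 := by
    apply LinearEquiv.toLinearMap_injective
    apply LinearMap.ext
    intro v
    show τ v = v
    rw [hτ, hg0]
    simp
  have ht₂inv : t₂⁻¹ = t₂ := inv_eq_of_mul_eq_one_right (invol_of_form h₂ hf₂)
  have : t₁ = t₂⁻¹ := eq_inv_of_mul_eq_one_left hτ1
  rw [this, ht₂inv]

/-! ### Strong exchange -/

lemma wordProd_take_succ {l : List (Fin R.r)} {j : ℕ} (hj : j < l.length) :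
    R.wordProd (l.take (j + 1)) = R.wordProd (l.take j) * R.S l[j] := by
  rw [List.take_succ, List.getElem?_eq_getElem hj, Option.toList_some, wordProd_concat]

/-- Strong exchange property. -/
lemma exchange_left (hR : R.IsRootSystem) {t : R.Aut} {β : R.V} {x : R.Aut}
    {l : List (Fin R.r)} (ht : R.ReflAlong t β) (hl : R.wordProd l = x)
    (hneg : x⁻¹ β ∉ R.pos) :
    ∃ m, m.Sublist l ∧ m.length + 1 = l.length ∧ t * x = R.wordProd m := by
  classical
  have hβpos : β ∈ R.pos := ht.1
  set P : ℕ → Prop := fun j => (R.wordProd (l.take j))⁻¹ β ∈ R.pos with hP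
  have hex : ∃ j, ¬ P j := by
    refine ⟨l.length, ?_⟩
    show (R.wordProd (l.take l.length))⁻¹ β ∉ R.pos
    rwa [List.take_length, hl]
  set k := Nat.find hex with hkdef
  have hkspec : ¬ P k := Nat.find_spec hex
  have hk0 : k ≠ 0 := by
    intro h0
    apply hkspec
    rw [h0]
    show (R.wordProd (l.take 0))⁻¹ β ∈ R.pos
    simpa [wordProd_nil] using hβpos
  have hkle : k ≤ l.length := Nat.find_min' hex (by
    show ¬ ((R.wordProd (l.take l.length))⁻¹ β ∈ R.pos)
    rwa [List.take_length, hl])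
  set j := k - 1 with hjdef
  have hjk : j + 1 = k := by omega
  have hjlen : j < l.length := by omega
  have hPj : P j := by
    have := Nat.find_min hex (m := j) (by omega)
    exact not_not.mp this
  have hPj1 : ¬ P (j + 1) := by rw [hjk]; exact hkspec
  set p := R.wordProd (l.take j) with hpdef
  set c := l[j] with hcdef
  set γ := p⁻¹ β with hγdef
  have hγpos : γ ∈ R.pos := hPj
  have hσγ : R.S c γ ∉ R.pos := by
    intro hcon
    apply hPj1
    show (R.wordProd (l.take (j + 1)))⁻¹ β ∈ R.pos
    rw [wordProd_take_succ hjlen, mul_inv_rev, S_inv hR]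
    show R.S c (p⁻¹ β) ∈ R.pos
    exact hcon
  obtain ⟨a, ha, hγa⟩ := eq_smul_simple_of_S_neg hR hγpos hσγ
  have hpW : p ∈ R.weylGroup := wordProd_mem _
  -- identify t with the conjugated simple reflection
  have hβeq : β = a • (p (R.α c)) := by
    have : p γ = β := by rw [hγdef, apply_inv_apply']
    rw [← this, hγa, map_smul]
  have hpαc : p (R.α c) ≠ 0 := by
    intro h0
    have : R.α c = 0 := by
      have := congrArg (⇑p⁻¹) h0
      rwa [inv_apply_apply', map_zero] at this
    exact hR.ne_zero _ (hR.simple_mem c) this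
  have htt : t = p * R.S c * p⁻¹ := by
    obtain ⟨_, ⟨f, hform, hf⟩, hmap⟩ := ht
    set f₂ : Module.Dual ℚ R.V := (R.coroot (R.α c)) ∘ₗ (p⁻¹ : R.Aut).toLinearMap with hf₂def
    have e1 : ∀ v, t v = v - f v • (a • p (R.α c)) := by
      intro v; rw [hform, hβeq]
    have e2 : f (a • p (R.α c)) = 2 := by rw [← hβeq, hf]
    have e3 : ∀ v, (p * R.S c * p⁻¹) v = v - f₂ v • p (R.α c) := by
      intro v
      show p (R.S c (p⁻¹ v)) = v - f₂ v • p (R.α c)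
      rw [S_apply hR, map_sub, map_smul, apply_inv_apply']
      rfl
    have e4 : f₂ (p (R.α c)) = 2 := by
      show (R.coroot (R.α c)) (p⁻¹ (p (R.α c))) = 2
      rw [inv_apply_apply', coroot_simple_self hR]
    have e5 : Set.MapsTo ⇑(p * R.S c * p⁻¹) R.Φ R.Φ := by
      intro v hv
      show p (R.S c (p⁻¹ v)) ∈ R.Φ
      apply root_map hR hpW
      have h1 : p⁻¹ v ∈ R.Φ := (mapsTo_roots hR hpW).2 hv
      rw [S_apply hR]
      exact hR.reflection_stable _ (hR.simple_mem c) _ h1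
    exact refl_eq_refl hR ha.ne' hpαc e1 e2 e3 e4 hmap e5
  -- the deletion identity
  have htake1 : l.take (j + 1) = l.take j ++ [c] := by
    rw [List.take_succ, List.getElem?_eq_getElem hjlen, Option.toList_some]
  have hlsplit : l = l.take j ++ c :: l.drop (j + 1) := by
    calc l = l.take (j + 1) ++ l.drop (j + 1) := (List.take_append_drop _ l).symm
    _ = (l.take j ++ [c]) ++ l.drop (j + 1) := by rw [htake1]
    _ = l.take j ++ c :: l.drop (j + 1) := by rw [List.append_assoc]; rfl
  refine ⟨l.take j ++ l.drop (j + 1), ?_, ?_, ?_⟩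
  · conv_rhs => rw [hlsplit]
    exact List.Sublist.append (List.Sublist.refl _) (List.sublist_cons_self _ _)
  · rw [List.length_append, List.length_take, List.length_drop]
    have : j ≤ l.length := le_of_lt hjlen
    omega
  · rw [← hl, htt]
    conv_lhs => rw [hlsplit]
    rw [wordProd_append, wordProd_cons, wordProd_append, ← hpdef]
    rw [← mul_assoc (p * R.S c * p⁻¹) p, inv_mul_cancel_right]
    rw [mul_assoc p (R.S c), ← mul_assoc (R.S c) (R.S c), S_mul_self hR, one_mul]

lemma exchange_right (hR : R.IsRootSystem) {x : R.Aut} {l : List (Fin R.r)} {i : Fin R.r}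
    (hl : R.wordProd l = x) (hneg : x (R.α i) ∉ R.pos) :
    ∃ m, m.Sublist l ∧ m.length + 1 = l.length ∧ x * R.S i = R.wordProd m := by
  have hrev : R.wordProd l.reverse = x⁻¹ := by rw [wordProd_reverse hR, hl]
  have hneg' : (x⁻¹)⁻¹ (R.α i) ∉ R.pos := by rwa [inv_inv]
  obtain ⟨m, hsub, hlen, hprod⟩ := exchange_left hR (reflAlong_S hR i) hrev hneg'
  refine ⟨m.reverse, ?_, ?_, ?_⟩
  · have := hsub.reverse
    rwa [List.reverse_reverse] at this
  · rwa [List.length_reverse, ← @List.length_reverse _ l]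
  · rw [wordProd_reverse hR, ← hprod, mul_inv_rev, inv_inv, S_inv hR]

/-! ### Length criteria -/

lemma len_lt_of_inv_neg (hR : R.IsRootSystem) {t x : R.Aut} {β : R.V}
    (ht : R.ReflAlong t β) (hx : x ∈ R.weylGroup) (h : x⁻¹ β ∉ R.pos) :
    R.len (t * x) < R.len x := by
  obtain ⟨l, _, hl, hll⟩ := exists_reduced hR hx
  obtain ⟨m, _, hlen, hprod⟩ := exchange_left hR ht hl h
  have := len_le hprod.symm
  omega

lemma len_lt_of_inv_pos (hR : R.IsRootSystem) {t x : R.Aut} {β : R.V}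
    (ht : R.ReflAlong t β) (htW : t ∈ R.weylGroup) (hx : x ∈ R.weylGroup)
    (h : x⁻¹ β ∈ R.pos) : R.len x < R.len (t * x) := by
  have hβΦ : β ∈ R.Φ := hR.pos_subset ht.1
  have hxiβΦ : x⁻¹ β ∈ R.Φ := (mapsTo_roots hR hx).2 hβΦ
  have hneg : (t * x)⁻¹ β ∉ R.pos := by
    have : (t * x)⁻¹ β = x⁻¹ (t⁻¹ β) := rfl
    rw [this, ht.inv_eq, ht.apply_self, map_neg]
    exact not_neg_mem_pos hR hxiβΦ h
  have := len_lt_of_inv_neg hR ht (mul_mem htW hx) hneg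
  rwa [← mul_assoc, ht.mul_self, one_mul] at this

lemma inv_pos_iff_len_lt (hR : R.IsRootSystem) {t x : R.Aut} {β : R.V}
    (ht : R.ReflAlong t β) (htW : t ∈ R.weylGroup) (hx : x ∈ R.weylGroup) :
    x⁻¹ β ∈ R.pos ↔ R.len x < R.len (t * x) := by
  constructor
  · exact len_lt_of_inv_pos hR ht htW hx
  · intro h
    by_contra hc
    exact absurd h (not_lt_of_gt (len_lt_of_inv_neg hR ht hx hc))

lemma inv_neg_iff_len_lt (hR : R.IsRootSystem) {t x : R.Aut} {β : R.V}
    (ht : R.ReflAlong t β) (htW : t ∈ R.weylGroup) (hx : x ∈ R.weylGroup) :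
    x⁻¹ β ∉ R.pos ↔ R.len (t * x) < R.len x := by
  constructor
  · exact len_lt_of_inv_neg hR ht hx
  · intro h
    by_contra hc
    exact absurd h (not_lt_of_gt (len_lt_of_inv_pos hR ht htW hx hc))

/-- Left version of the simple-reflection length criterion. -/
lemma S_mul_lt_iff (hR : R.IsRootSystem) {x : R.Aut} (hx : x ∈ R.weylGroup) (i : Fin R.r) :
    R.len x < R.len (R.S i * x) ↔ x⁻¹ (R.α i) ∈ R.pos :=
  (inv_pos_iff_len_lt hR (reflAlong_S hR i) (S_mem i) hx).symm

lemma S_mul_lt_iff' (hR : R.IsRootSystem) {x : R.Aut} (hx : x ∈ R.weylGroup) (i : Fin R.r) :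
    R.len (R.S i * x) < R.len x ↔ x⁻¹ (R.α i) ∉ R.pos :=
  (inv_neg_iff_len_lt hR (reflAlong_S hR i) (S_mem i) hx).symm

lemma len_S_mul_ne (hR : R.IsRootSystem) {x : R.Aut} (hx : x ∈ R.weylGroup) (i : Fin R.r) :
    R.len (R.S i * x) ≠ R.len x := by
  by_cases h : x⁻¹ (R.α i) ∈ R.pos
  · exact ((S_mul_lt_iff hR hx i).mpr h).ne'
  · exact ((S_mul_lt_iff' hR hx i).mpr h).ne

/-- Right version. -/
lemma mul_S_lt_iff (hR : R.IsRootSystem) {x : R.Aut} (hx : x ∈ R.weylGroup) (i : Fin R.r) :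
    R.len x < R.len (x * R.S i) ↔ x (R.α i) ∈ R.pos := by
  have h1 : R.len (x * R.S i) = R.len (R.S i * x⁻¹) := by
    rw [← len_inv hR (mul_mem hx (S_mem i)), mul_inv_rev, S_inv hR]
  have h2 : R.len x = R.len x⁻¹ := (len_inv hR hx).symm
  rw [h1, h2, S_mul_lt_iff hR (inv_mem hx) i, inv_inv]

lemma mul_S_lt_iff' (hR : R.IsRootSystem) {x : R.Aut} (hx : x ∈ R.weylGroup) (i : Fin R.r) :
    R.len (x * R.S i) < R.len x ↔ x (R.α i) ∉ R.pos := by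
  have h1 : R.len (x * R.S i) = R.len (R.S i * x⁻¹) := by
    rw [← len_inv hR (mul_mem hx (S_mem i)), mul_inv_rev, S_inv hR]
  have h2 : R.len x = R.len x⁻¹ := (len_inv hR hx).symm
  rw [h1, h2, S_mul_lt_iff' hR (inv_mem hx) i, inv_inv]

/-! ### Reduced sublists (deletion property) -/

lemma reduced_nil : R.Reduced ([] : List (Fin R.r)) := by
  show R.len (R.wordProd []) = _
  rw [wordProd_nil, len_one]
  rfl

lemma exists_reduced_sublist (hR : R.IsRootSystem) :
    ∀ (n : ℕ) (l : List (Fin R.r)), l.length ≤ n →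
    ∃ m, m.Sublist l ∧ R.Reduced m ∧ R.wordProd m = R.wordProd l := by
  intro n
  induction n with
  | zero =>
    intro l hl
    have : l = [] := List.length_eq_zero_iff.mp (Nat.le_zero.mp hl)
    subst this
    exact ⟨[], List.Sublist.refl _, reduced_nil, rfl⟩
  | succ n ih =>
    intro l hl
    by_cases hred : R.Reduced l
    · exact ⟨l, List.Sublist.refl _, hred, rfl⟩
    · classical
      have hlenlt : R.len (R.wordProd l) < l.length :=
        lt_of_le_of_ne (len_le rfl) hred
      set Q : ℕ → Prop := fun k => R.len (R.wordProd (l.take k)) < k with hQ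
      have hexQ : ∃ k, Q k := ⟨l.length, by
        show R.len (R.wordProd (l.take l.length)) < l.length
        rwa [List.take_length]⟩
      set k := Nat.find hexQ with hkdef
      have hkQ : Q k := Nat.find_spec hexQ
      have hkle : k ≤ l.length := Nat.find_min' hexQ (by
        show R.len (R.wordProd (l.take l.length)) < l.length
        rwa [List.take_length])
      have hk0 : k ≠ 0 := by
        intro h0
        have := hkQ
        rw [h0] at this
        exact Nat.not_lt_zero _ this
      set j := k - 1 with hjdef
      have hjk : j + 1 = k := by omega
      have hjlen : j < l.length := by omega
      set x := R.wordProd (l.take j) with hxdef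
      have hxlen : R.len x = j := by
        have h1 : ¬ Q j := Nat.find_min hexQ (by omega)
        have h2 : R.len x ≤ (l.take j).length := len_le rfl
        rw [List.length_take] at h2
        have h3 : ¬ (R.len x < j) := h1
        omega
      set c := l[j] with hcdef
      have hprodtake : R.wordProd (l.take (j+1)) = x * R.S c :=
        wordProd_take_succ hjlen
      have hlt : R.len (x * R.S c) ≤ j := by
        have := hkQ
        rw [← hjk] at this
        have h2 : R.len (R.wordProd (l.take (j+1))) < j + 1 := this
        rw [hprodtake] at h2
        omega
      have hxW : x ∈ R.weylGroup := by rw [hxdef]; exact wordProd_mem _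
      have hnegc : x (R.α c) ∉ R.pos := by
        intro hcon
        have := (mul_S_lt_iff hR hxW c).mpr hcon
        omega
      obtain ⟨m₀, hsub₀, hlen₀, hprod₀⟩ := exchange_right hR hxdef.symm hnegc
      set l' := m₀ ++ l.drop (j+1) with hl'def
      have hπl' : R.wordProd l' = R.wordProd l := by
        rw [hl'def, wordProd_append, ← hprod₀, ← hprodtake, ← wordProd_append,
          List.take_append_drop]
      have hsubl' : l'.Sublist l := by
        have h1 : m₀.Sublist (l.take (j+1)) := hsub₀.trans (by
          rw [List.take_succ, List.getElem?_eq_getElem hjlen, Option.toList_some]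
          exact List.sublist_append_left _ _)
        have h2 := List.Sublist.append h1 (List.Sublist.refl (l.drop (j+1)))
        rwa [List.take_append_drop] at h2
      have hlen' : l'.length ≤ n := by
        rw [hl'def, List.length_append, List.length_drop]
        rw [List.length_take] at hlen₀
        omega
      obtain ⟨m, hm, hmred, hmp⟩ := ih l' hlen'
      exact ⟨m, hm.trans hsubl', hmred, by rw [hmp, hπl']⟩

/-! ### The chain (Bruhat) order -/

/-- One step of the Bruhat (reflection) order. -/
def StepRel (R : RootData) (x y : R.Aut) : Prop :=
  ∃ t β, R.ReflAlong t β ∧ t ∈ R.weylGroup ∧ y = t * x ∧ R.len x < R.len y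

/-- The Bruhat order via increasing reflection chains. -/
def Ch (R : RootData) : R.Aut → R.Aut → Prop := Relation.ReflTransGen R.StepRel

lemma StepRel.mem_of {x y : R.Aut} (h : R.StepRel x y) (hy : y ∈ R.weylGroup) :
    x ∈ R.weylGroup := by
  obtain ⟨t, β, hrt, htW, rfl, _⟩ := h
  have := mul_mem (inv_mem htW) hy
  rwa [inv_mul_cancel_left] at this

lemma ch_mem {v w : R.Aut} (h : R.Ch v w) (hw : w ∈ R.weylGroup) : v ∈ R.weylGroup := by
  induction h with
  | refl => exact hw
  | tail _ hstep ih => exact ih (hstep.mem_of hw)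

lemma ch_len_le {v w : R.Aut} (h : R.Ch v w) : R.len v ≤ R.len w := by
  induction h with
  | refl => exact le_refl _
  | tail _ hstep ih =>
    obtain ⟨t, β, _, _, _, hlt⟩ := hstep
    omega

lemma ch_eq_of_len_le {v w : R.Aut} (h : R.Ch v w) (hl : R.len w ≤ R.len v) : v = w := by
  rcases Relation.ReflTransGen.cases_tail h with h' | ⟨z, hvz, hstep⟩
  · exact h'.symm
  · exfalso
    obtain ⟨t, β, _, _, _, hlt⟩ := hstep
    have := ch_len_le hvz
    omega

lemma ch_step {x y : R.Aut} (h : R.StepRel x y) : R.Ch x y :=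
  Relation.ReflTransGen.single h

/-- A chain below `w` is realized as a subword of any reduced word for `w`. -/
lemma chain_subword (hR : R.IsRootSystem) :
    ∀ (n : ℕ) (w : R.Aut), w ∈ R.weylGroup → R.len w ≤ n → ∀ y, R.Ch y w →
    ∀ l, R.Reduced l → R.wordProd l = w → ∃ m, m.Sublist l ∧ R.wordProd m = y := by
  intro n
  induction n with
  | zero =>
    intro w hw hlen y hch l hred hl
    rcases Relation.ReflTransGen.cases_tail hch with rfl | ⟨z, hyz, hstep⟩
    · exact ⟨l, List.Sublist.refl _, hl⟩
    · exfalso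
      obtain ⟨t, β, _, _, _, hlt⟩ := hstep
      omega
  | succ n ih =>
    intro w hw hlen y hch l hred hl
    rcases Relation.ReflTransGen.cases_tail hch with rfl | ⟨z, hyz, hstep⟩
    · exact ⟨l, List.Sublist.refl _, hl⟩
    · obtain ⟨t, β, hrt, htW, hzw, hlt⟩ := hstep
      have htw : t * w = z := by
        rw [hzw, ← mul_assoc, hrt.mul_self, one_mul]
      have hzW : z ∈ R.weylGroup := by
        rw [← htw]; exact mul_mem htW hw
      have hneg : w⁻¹ β ∉ R.pos := by
        rw [inv_neg_iff_len_lt hR hrt htW hw, htw]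
        exact hlt
      obtain ⟨m₀, hsub₀, _, hprod₀⟩ := exchange_left hR hrt hl hneg
      obtain ⟨m₁, hsub₁, hred₁, hprod₁⟩ :=
        exists_reduced_sublist hR m₀.length m₀ (le_refl _)
      have hm₁z : R.wordProd m₁ = z := by rw [hprod₁, ← hprod₀, htw]
      have hzn : R.len z ≤ n := by omega
      obtain ⟨m, hm, hmp⟩ := ih z hzW hzn y hyz m₁ hred₁ hm₁z
      exact ⟨m, hm.trans (hsub₁.trans hsub₀), hmp⟩

/-! ### Lifting properties and the subword property, by joint induction -/

lemma lifting_ABC (hR : R.IsRootSystem) : ∀ n : ℕ,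
    ((∀ (w v : R.Aut) (i : Fin R.r), w ∈ R.weylGroup → R.Ch v w →
       R.len (R.S i * w) < R.len w → R.len v < R.len (R.S i * v) → R.len w ≤ n →
       R.Ch v (R.S i * w)) ∧
     (∀ (w v : R.Aut) (i : Fin R.r), w ∈ R.weylGroup → R.Ch v w →
       R.len w < R.len (R.S i * w) → R.len v < R.len (R.S i * v) →
       R.len (R.S i * w) ≤ n → R.Ch (R.S i * v) (R.S i * w)) ∧
     (∀ l : List (Fin R.r), R.Reduced l → l.length ≤ n → ∀ l', l'.Sublist l →
       R.Ch (R.wordProd l') (R.wordProd l))) := by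
  intro n
  induction n using Nat.strong_induction_on with
  | _ n ih =>
  have hA : ∀ (w v : R.Aut) (i : Fin R.r), w ∈ R.weylGroup → R.Ch v w →
      R.len (R.S i * w) < R.len w → R.len v < R.len (R.S i * v) → R.len w ≤ n →
      R.Ch v (R.S i * w) := by
    intro w v i hw hch hdw huv hn
    rcases Relation.ReflTransGen.cases_tail hch with rfl | ⟨y, hvy, hstep⟩
    · exfalso; omega
    · obtain ⟨t, β, hrt, htW, hwty, hlty⟩ := hstep
      have hyW : y ∈ R.weylGroup := StepRel.mem_of ⟨t, β, hrt, htW, hwty, hlty⟩ hw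
      have hσwlen : R.len (R.S i * w) + 1 = R.len w := by
        have := len_le_S_mul hR hw i
        omega
      by_cases hyi : y⁻¹ (R.α i) ∈ R.pos
      · -- `S i * y > y`
        have huy : R.len y < R.len (R.S i * y) := (S_mul_lt_iff hR hyW i).mpr hyi
        by_cases hyw : R.S i * y = w
        · have hkey : R.S i * w = y := by
            rw [← hyw, ← mul_assoc, S_mul_self hR, one_mul]
          rw [hkey]
          exact hvy
        · -- realize `y` in a reduced word of `w` starting with `i`
          have hσwW : R.S i * w ∈ R.weylGroup := mul_mem (S_mem i) hw
          obtain ⟨r₂, hr₂red, hr₂prod, hr₂len⟩ := exists_reduced hR hσwW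
          have hlr : R.wordProd (i :: r₂) = w := by
            rw [wordProd_cons, hr₂prod, ← mul_assoc, S_mul_self hR, one_mul]
          have hred_ir : R.Reduced (i :: r₂) := by
            show R.len (R.wordProd (i :: r₂)) = (i :: r₂).length
            rw [hlr, List.length_cons, hr₂len]
            omega
          have hyw_ch : R.Ch y w := ch_step ⟨t, β, hrt, htW, hwty, hlty⟩
          obtain ⟨m, hmsub, hmprod⟩ :=
            chain_subword hR (R.len w) w hw (le_refl _) y hyw_ch (i :: r₂) hred_ir hlr
          have hfuel : r₂.length < n := by
            rw [hr₂len]; omega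
          have hC := (ih r₂.length hfuel).2.2
          rcases List.sublist_cons_iff.mp hmsub with hm' | ⟨m₃, rfl, hm₃⟩
          · have hych : R.Ch y (R.S i * w) := by
              have := hC r₂ hr₂red (le_refl _) m hm'
              rwa [hmprod, hr₂prod] at this
            exact hvy.trans hych
          · have hσy : R.wordProd m₃ = R.S i * y := by
              have h1 : R.wordProd (i :: m₃) = y := hmprod
              rw [wordProd_cons] at h1
              rw [← h1, ← mul_assoc, S_mul_self hR, one_mul]
            have hch2 : R.Ch (R.S i * y) (R.S i * w) := by
              have := hC r₂ hr₂red (le_refl _) m₃ hm₃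
              rwa [hσy, hr₂prod] at this
            have hstep2 : R.StepRel y (R.S i * y) :=
              ⟨R.S i, R.α i, reflAlong_S hR i, S_mem i, rfl, huy⟩
            exact (hvy.trans (ch_step hstep2)).trans hch2
      · -- `S i * y < y`
        have hdy : R.len (R.S i * y) < R.len y := (S_mul_lt_iff' hR hyW i).mpr hyi
        have hA' := (ih (R.len y) (by omega)).1
        have hch1 : R.Ch v (R.S i * y) := hA' y v i hyW hvy hdy huv (le_refl _)
        obtain ⟨β', hβ'⟩ := exists_reflAlong_conj hR (S_mem i) hrt
        have hstep3 : R.StepRel (R.S i * y) (R.S i * w) := by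
          refine ⟨R.S i * t * (R.S i)⁻¹, β', hβ',
            mul_mem (mul_mem (S_mem i) htW) (inv_mem (S_mem i)), ?_, ?_⟩
          · rw [hwty, S_inv hR]
            rw [show R.S i * t * R.S i * (R.S i * y) = R.S i * t * (R.S i * R.S i) * y by
              group]
            rw [S_mul_self hR, mul_one, mul_assoc]
          · omega
        exact hch1.trans (ch_step hstep3)
  have hB : ∀ (w v : R.Aut) (i : Fin R.r), w ∈ R.weylGroup → R.Ch v w →
      R.len w < R.len (R.S i * w) → R.len v < R.len (R.S i * v) →
      R.len (R.S i * w) ≤ n → R.Ch (R.S i * v) (R.S i * w) := by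
    intro w v i hw hch hup huv hn
    rcases Relation.ReflTransGen.cases_tail hch with rfl | ⟨y, hvy, hstep⟩
    · exact Relation.ReflTransGen.refl
    · obtain ⟨t, β, hrt, htW, hwty, hlty⟩ := hstep
      have hyW : y ∈ R.weylGroup := StepRel.mem_of ⟨t, β, hrt, htW, hwty, hlty⟩ hw
      have hσylen : R.len (R.S i * y) ≤ R.len y + 1 := len_S_mul_le hR hyW i
      by_cases hyi : y⁻¹ (R.α i) ∈ R.pos
      · have huy : R.len y < R.len (R.S i * y) := (S_mul_lt_iff hR hyW i).mpr hyi
        have hB' := (ih (R.len (R.S i * y)) (by omega)).2.1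
        have hch1 : R.Ch (R.S i * v) (R.S i * y) :=
          hB' y v i hyW hvy huy huv (le_refl _)
        obtain ⟨β', hβ'⟩ := exists_reflAlong_conj hR (S_mem i) hrt
        have hstep3 : R.StepRel (R.S i * y) (R.S i * w) := by
          refine ⟨R.S i * t * (R.S i)⁻¹, β', hβ',
            mul_mem (mul_mem (S_mem i) htW) (inv_mem (S_mem i)), ?_, ?_⟩
          · rw [hwty, S_inv hR]
            rw [show R.S i * t * R.S i * (R.S i * y) = R.S i * t * (R.S i * R.S i) * y by
              group]
            rw [S_mul_self hR, mul_one, mul_assoc]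
          · omega
        exact hch1.trans (ch_step hstep3)
      · have hdy : R.len (R.S i * y) < R.len y := (S_mul_lt_iff' hR hyW i).mpr hyi
        have hA' := (ih (R.len y) (by omega)).1
        have hch1 : R.Ch v (R.S i * y) := hA' y v i hyW hvy hdy huv (le_refl _)
        have hσσ : R.S i * (R.S i * y) = y := by
          rw [← mul_assoc, S_mul_self hR, one_mul]
        have hB' := (ih (R.len y) (by omega)).2.1
        have hch2 : R.Ch (R.S i * v) y := by
          have := hB' (R.S i * y) v i (mul_mem (S_mem i) hyW) hch1
            (by rw [hσσ]; exact hdy) huv (by rw [hσσ])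
          rwa [hσσ] at this
        have hstepw : R.StepRel y w := ⟨t, β, hrt, htW, hwty, hlty⟩
        have hstepσ : R.StepRel w (R.S i * w) :=
          ⟨R.S i, R.α i, reflAlong_S hR i, S_mem i, rfl, hup⟩
        exact (hch2.trans (ch_step hstepw)).trans (ch_step hstepσ)
  have hC : ∀ l : List (Fin R.r), R.Reduced l → l.length ≤ n → ∀ l', l'.Sublist l →
      R.Ch (R.wordProd l') (R.wordProd l) := by
    intro l hred hlen l' hsub
    match l, hred, hlen, hsub with
    | [], _, _, hsub =>
      have : l' = [] := List.sublist_nil.mp hsub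
      subst this
      exact Relation.ReflTransGen.refl
    | i :: tl, hred, hlen, hsub =>
      obtain ⟨htred, hlplus⟩ := reduced_cons hR hred
      have h5 : R.len (R.wordProd tl) = tl.length := htred
      have hlenc : (i :: tl).length ≤ n := hlen
      rw [List.length_cons] at hlenc
      have hCt := (ih tl.length (by omega)).2.2 tl htred (le_refl _)
      have hup : R.len (R.wordProd tl) < R.len (R.wordProd (i :: tl)) := by omega
      have hstepup : R.StepRel (R.wordProd tl) (R.wordProd (i :: tl)) :=
        ⟨R.S i, R.α i, reflAlong_S hR i, S_mem i, by rw [wordProd_cons], hup⟩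
      rcases List.sublist_cons_iff.mp hsub with hm | ⟨m₃, rfl, hm₃⟩
      · exact (hCt l' hm).trans (ch_step hstepup)
      · have hch : R.Ch (R.wordProd m₃) (R.wordProd tl) := hCt m₃ hm₃
        by_cases hb : R.len (R.wordProd m₃) < R.len (R.S i * R.wordProd m₃)
        · have hch2 := hB (R.wordProd tl) (R.wordProd m₃) i (wordProd_mem tl) hch
            (by rw [← wordProd_cons]; exact hup) hb
            (by rw [← wordProd_cons]; omega)
          rw [wordProd_cons, wordProd_cons]
          exact hch2
        · have hne := len_S_mul_ne hR (wordProd_mem m₃) i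
          have hlt : R.len (R.S i * R.wordProd m₃) < R.len (R.wordProd m₃) := by omega
          have hstep1 : R.StepRel (R.S i * R.wordProd m₃) (R.wordProd m₃) := by
            refine ⟨R.S i, R.α i, reflAlong_S hR i, S_mem i, ?_, hlt⟩
            rw [← mul_assoc, S_mul_self hR, one_mul]
          rw [wordProd_cons]
          exact ((ch_step hstep1).trans hch).trans (ch_step hstepup)
  exact ⟨hA, hB, hC⟩

/-! ### Order conversions -/

lemma ch_of_bruhatLE (hR : R.IsRootSystem) {u w : R.Aut} (h : R.BruhatLE u w) :
    R.Ch u w := by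
  obtain ⟨l, hred, hw, l', hsub, hu⟩ := h
  have := (lifting_ABC hR l.length).2.2 l hred (le_refl _) l' hsub
  rwa [hu, hw] at this

lemma bruhatLE_of_ch (hR : R.IsRootSystem) {u w : R.Aut} (hw : w ∈ R.weylGroup)
    (h : R.Ch u w) : R.BruhatLE u w := by
  obtain ⟨l, hred, hl, _⟩ := exists_reduced hR hw
  obtain ⟨m, hsub, hm⟩ := chain_subword hR (R.len w) w hw (le_refl _) u h l hred hl
  exact ⟨l, hred, hl, m, hsub, hm⟩

/-! ### Demazure product lemmas -/

lemma dmulList_nil (w : R.Aut) : R.dmulList [] w = w := rfl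

lemma dmulList_cons (i : Fin R.r) (l : List (Fin R.r)) (w : R.Aut) :
    R.dmulList (i :: l) w = R.dmulStep i (R.dmulList l w) := rfl

lemma dmulList_mem {w : R.Aut} (hw : w ∈ R.weylGroup) (l : List (Fin R.r)) :
    R.dmulList l w ∈ R.weylGroup := by
  induction l with
  | nil => exact hw
  | cons i t ih =>
    rw [dmulList_cons, dmulStep]
    split
    · exact mul_mem (S_mem i) ih
    · exact ih

/-- Key structure lemma: `dmulList l w = (wordProd l) * w''` with `w'' ≤ w`
and additive lengths. -/
lemma dmul_left_quot (hR : R.IsRootSystem) :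
    ∀ l : List (Fin R.r), R.Reduced l → ∀ w, w ∈ R.weylGroup →
    ∃ w'', R.dmulList l w = R.wordProd l * w'' ∧ R.Ch w'' w ∧
      R.len (R.wordProd l * w'') = R.len (R.wordProd l) + R.len w'' := by
  intro l
  induction l with
  | nil =>
    intro _ w hw
    refine ⟨w, ?_, Relation.ReflTransGen.refl, ?_⟩
    · rw [dmulList_nil, wordProd_nil, one_mul]
    · rw [wordProd_nil, one_mul, len_one, Nat.zero_add]
  | cons i t iht =>
    intro hred w hw
    obtain ⟨htred, hplus⟩ := reduced_cons hR hred
    obtain ⟨w'', hx, hch, hadd⟩ := iht htred w hw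
    have e0 : R.len (R.wordProd (i :: t)) = t.length + 1 := by
      have := hred; rwa [Reduced, List.length_cons] at this
    have e1 : R.len (R.wordProd t) = t.length := htred
    have hw''W : w'' ∈ R.weylGroup := ch_mem hch hw
    have hxW : R.wordProd t * w'' ∈ R.weylGroup := mul_mem (wordProd_mem t) hw''W
    rw [dmulList_cons, hx, dmulStep]
    split_ifs with hcase
    · refine ⟨w'', by rw [wordProd_cons, mul_assoc], hch, ?_⟩
      have e2 : R.len (R.wordProd (i :: t) * w'')
          = R.len (R.S i * (R.wordProd t * w'')) := by
        rw [wordProd_cons, mul_assoc]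
      have e3 := len_S_mul_le hR hxW i
      omega
    · have hdown : R.len (R.S i * (R.wordProd t * w'')) < R.len (R.wordProd t * w'') :=
        lt_of_le_of_ne (not_lt.mp hcase) (len_S_mul_ne hR hxW i)
      set t₀ := (R.wordProd t)⁻¹ * R.S i * R.wordProd t with ht₀def
      have ht₀form : t₀ = (R.wordProd t)⁻¹ * R.S i * ((R.wordProd t)⁻¹)⁻¹ := by
        rw [inv_inv]
      have hβpos : (R.wordProd t)⁻¹ (R.α i) ∈ R.pos := by
        have hup : R.len (R.wordProd t) < R.len (R.S i * R.wordProd t) := by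
          rw [← wordProd_cons]; omega
        exact (S_mul_lt_iff hR (wordProd_mem t) i).mp hup
      have hrt₀ : R.ReflAlong t₀ ((R.wordProd t)⁻¹ (R.α i)) := by
        rw [ht₀form]
        exact reflAlong_conj_pos hR (inv_mem (wordProd_mem t)) (reflAlong_S hR i) hβpos
      have ht₀W : t₀ ∈ R.weylGroup :=
        mul_mem (mul_mem (inv_mem (wordProd_mem t)) (S_mem i)) (wordProd_mem t)
      set w₂ := t₀ * w'' with hw₂def
      have hxeq : R.wordProd (i :: t) * w₂ = R.wordProd t * w'' := by
        rw [wordProd_cons, hw₂def, ht₀def]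
        rw [show R.S i * R.wordProd t * ((R.wordProd t)⁻¹ * R.S i * R.wordProd t * w'')
            = (R.S i * R.S i) * (R.wordProd t * w'') by group]
        rw [S_mul_self hR, one_mul]
      have hlenw₂ : R.len w₂ < R.len w'' := by
        apply len_lt_of_inv_neg hR hrt₀ hw''W
        have hre : w''⁻¹ ((R.wordProd t)⁻¹ (R.α i)) = (R.wordProd t * w'')⁻¹ (R.α i) := rfl
        rw [hre]
        exact (S_mul_lt_iff' hR hxW i).mp hdown
      refine ⟨w₂, hxeq.symm, Relation.ReflTransGen.head ?_ hch, ?_⟩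
      · refine ⟨t₀, _, hrt₀, ht₀W, ?_, hlenw₂⟩
        rw [hw₂def, ← mul_assoc, hrt₀.mul_self, one_mul]
      · rw [hxeq]
        have hub : R.len (R.wordProd t * w'') ≤ R.len (R.wordProd (i :: t)) + R.len w₂ := by
          rw [← hxeq]
          exact len_mul_le hR (wordProd_mem _) (mul_mem ht₀W hw''W)
        omega

/-- Monotonicity lemma: if `w' ≤ w` and lengths add, `(wordProd l) * w'` lies
below the Demazure product. -/
lemma dmul_dominates (hR : R.IsRootSystem) :
    ∀ l : List (Fin R.r), R.Reduced l → ∀ w, w ∈ R.weylGroup → ∀ w', w' ∈ R.weylGroup →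
    R.Ch w' w → R.len (R.wordProd l * w') = R.len (R.wordProd l) + R.len w' →
    R.Ch (R.wordProd l * w') (R.dmulList l w) := by
  intro l
  induction l with
  | nil =>
    intro _ w hw w' hw'W hch _
    rw [wordProd_nil, one_mul, dmulList_nil]
    exact hch
  | cons i t iht =>
    intro hred w hw w' hw'W hch hadd
    obtain ⟨htred, hplus⟩ := reduced_cons hR hred
    have e0 : R.len (R.wordProd (i :: t)) = t.length + 1 := by
      have := hred; rwa [Reduced, List.length_cons] at this
    have e1 : R.len (R.wordProd t) = t.length := htred
    have huW : R.wordProd t * w' ∈ R.weylGroup := mul_mem (wordProd_mem t) hw'W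
    have h2 : R.wordProd (i :: t) * w' = R.S i * (R.wordProd t * w') := by
      rw [wordProd_cons, mul_assoc]
    rw [h2] at hadd
    have hadd' : R.len (R.wordProd t * w') = R.len (R.wordProd t) + R.len w' := by
      have hle := len_mul_le hR (wordProd_mem t) hw'W
      have h3 := len_S_mul_le hR huW i
      omega
    have hIH : R.Ch (R.wordProd t * w') (R.dmulList t w) :=
      iht htred w hw w' hw'W hch hadd'
    have hupv : R.len (R.wordProd t * w') < R.len (R.S i * (R.wordProd t * w')) := by
      omega
    have hxW : R.dmulList t w ∈ R.weylGroup := dmulList_mem hw t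
    rw [dmulList_cons, dmulStep]
    split_ifs with hcase
    · have hB := (lifting_ABC hR (R.len (R.S i * R.dmulList t w))).2.1
      have := hB (R.dmulList t w) (R.wordProd t * w') i hxW hIH hcase hupv (le_refl _)
      rw [h2]
      exact this
    · have hdown : R.len (R.S i * R.dmulList t w) < R.len (R.dmulList t w) :=
        lt_of_le_of_ne (not_lt.mp hcase) (len_S_mul_ne hR hxW i)
      have hA := (lifting_ABC hR (R.len (R.dmulList t w))).1
      have hch1 : R.Ch (R.wordProd t * w') (R.S i * R.dmulList t w) :=
        hA (R.dmulList t w) (R.wordProd t * w') i hxW hIH hdown hupv (le_refl _)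
      have hσσ : R.S i * (R.S i * R.dmulList t w) = R.dmulList t w := by
        rw [← mul_assoc, S_mul_self hR, one_mul]
      have hB := (lifting_ABC hR (R.len (R.dmulList t w))).2.1
      have hch2 : R.Ch (R.S i * (R.wordProd t * w')) (R.dmulList t w) := by
        have := hB (R.S i * R.dmulList t w) (R.wordProd t * w') i
          (mul_mem (S_mem i) hxW) hch1 (by rw [hσσ]; exact hdown) hupv
          (le_of_eq (congrArg R.len hσσ))
        rwa [hσσ] at this
      rw [h2]
      exact hch2

/-! ### The longest element -/

lemma longest_simple_right (hR : R.IsRootSystem) {w₀ : R.Aut} (h₀ : R.IsLongest w₀)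
    (i : Fin R.r) : w₀ (R.α i) ∉ R.pos := by
  intro hcon
  have h1 := (mul_S_lt_iff hR h₀.1 i).mpr hcon
  have h2 := h₀.2 (w₀ * R.S i) (mul_mem h₀.1 (S_mem i))
  omega

lemma longest_flips (hR : R.IsRootSystem) {w₀ : R.Aut} (h₀ : R.IsLongest w₀)
    {β : R.V} (hβ : β ∈ R.pos) : w₀ β ∉ R.pos := by
  intro hcon
  obtain ⟨c, hc0, hcβ⟩ := hR.pos_nonneg_comb β hβ
  obtain ⟨e, he0, heβ⟩ := hR.pos_nonneg_comb (w₀ β) hcon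
  have hneg : ∀ i', -(w₀ (R.α i')) ∈ R.pos := fun i' =>
    neg_mem_pos hR (root_map hR h₀.1 (hR.simple_mem i')) (longest_simple_right hR h₀ i')
  choose d hd0 hdsum using fun i' => hR.pos_nonneg_comb _ (hneg i')
  have hw₀β : w₀ β = ∑ i', c i' • w₀ (R.α i') := by
    rw [hcβ, map_sum]
    exact Finset.sum_congr rfl (fun i' _ => by rw [map_smul])
  have hsum0 : ∑ j, (e j + ∑ i', c i' * d i' j) • R.α j = 0 := by
    have expand2 : ∑ j, (∑ i', c i' * d i' j) • R.α j
        = ∑ i', c i' • (∑ j, d i' j • R.α j) := by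
      calc ∑ j, (∑ i', c i' * d i' j) • R.α j
          = ∑ j, ∑ i', (c i' * d i' j) • R.α j :=
            Finset.sum_congr rfl (fun j _ => Finset.sum_smul)
        _ = ∑ i', ∑ j, (c i' * d i' j) • R.α j := Finset.sum_comm
        _ = ∑ i', c i' • (∑ j, d i' j • R.α j) := Finset.sum_congr rfl (fun i' _ => by
            rw [Finset.smul_sum]
            exact Finset.sum_congr rfl (fun j _ => (mul_smul _ _ _)))
    have expand : ∑ j, (e j + ∑ i', c i' * d i' j) • R.α j
        = (∑ j, e j • R.α j) + ∑ i', c i' • (∑ j, d i' j • R.α j) := by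
      rw [← expand2, ← Finset.sum_add_distrib]
      exact Finset.sum_congr rfl (fun j _ => add_smul _ _ _)
    rw [expand, ← heβ]
    have hrw : ∑ i', c i' • (∑ j, d i' j • R.α j) = ∑ i', c i' • (-(w₀ (R.α i'))) :=
      Finset.sum_congr rfl (fun i' _ => by rw [← hdsum i'])
    rw [hrw]
    rw [show ∑ i', c i' • (-(w₀ (R.α i'))) = -∑ i', c i' • w₀ (R.α i') by
      rw [← Finset.sum_neg_distrib]
      exact Finset.sum_congr rfl (fun i' _ => smul_neg _ _)]
    rw [← hw₀β]
    simp
  have hzero := Fintype.linearIndependent_iff.mp hR.indep _ hsum0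
  have he0' : ∀ j, e j = 0 := by
    intro j
    have h1 := hzero j
    have h2 : 0 ≤ ∑ i', c i' * d i' j :=
      Finset.sum_nonneg (fun i' _ => mul_nonneg (hc0 i') (hd0 i' j))
    have := he0 j
    linarith
  have : w₀ β = 0 := by
    rw [heβ]
    exact Finset.sum_eq_zero (fun j _ => by rw [he0' j, zero_smul])
  exact hR.ne_zero _ (hR.pos_subset hcon) this

lemma len_mul_S_le (hR : R.IsRootSystem) {x : R.Aut} (hx : x ∈ R.weylGroup)
    (i : Fin R.r) : R.len (x * R.S i) ≤ R.len x + 1 := by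
  have h1 := len_mul_le hR hx (S_mem i)
  have h2 : R.len (R.S i) ≤ 1 := len_le (wordProd_singleton i)
  omega

lemma longest_mul_len (hR : R.IsRootSystem) {w₀ : R.Aut} (h₀ : R.IsLongest w₀) :
    ∀ (n : ℕ) (x : R.Aut), x ∈ R.weylGroup → R.len x ≤ n →
    R.len (w₀ * x) + R.len x = R.len w₀ := by
  intro n
  induction n with
  | zero =>
    intro x hx hn
    have := len_eq_zero hR hx (Nat.le_zero.mp hn)
    subst this
    rw [mul_one, len_one, add_zero]
  | succ n ih =>
    intro x hx hn
    by_cases h0 : R.len x = 0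
    · have := len_eq_zero hR hx h0
      subst this
      rw [mul_one, len_one, add_zero]
    · obtain ⟨l, hred, hl, hll⟩ := exists_reduced hR hx
      have hlne : l ≠ [] := by
        intro h
        rw [h] at hll
        simp at hll
        exact h0 hll.symm
      obtain ⟨t, i, rfl⟩ : ∃ t i, l = t ++ [i] :=
        ⟨l.dropLast, l.getLast hlne, (List.dropLast_append_getLast hlne).symm⟩
      obtain ⟨htred, hplus⟩ := reduced_concat hR hred
      have hx₁ : R.wordProd t * R.S i = x := by rw [← wordProd_concat, hl]
      have htW : R.wordProd t ∈ R.weylGroup := wordProd_mem t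
      have h1 : R.len (R.wordProd t) = t.length := htred
      have h2 : R.len x = t.length + 1 := by
        rw [← hll]; simp
      have hpos : (R.wordProd t) (R.α i) ∈ R.pos := by
        apply (mul_S_lt_iff hR htW i).mp
        rw [hx₁]
        omega
      have hneg : (w₀ * R.wordProd t) (R.α i) ∉ R.pos := by
        have : (w₀ * R.wordProd t) (R.α i) = w₀ ((R.wordProd t) (R.α i)) := rfl
        rw [this]
        exact longest_flips hR h₀ hpos
      have hlt : R.len ((w₀ * R.wordProd t) * R.S i) < R.len (w₀ * R.wordProd t) :=
        (mul_S_lt_iff' hR (mul_mem h₀.1 htW) i).mpr hneg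
      have hbound : R.len (w₀ * R.wordProd t)
          ≤ R.len ((w₀ * R.wordProd t) * R.S i) + 1 := by
        have := len_mul_S_le hR (mul_mem (mul_mem h₀.1 htW) (S_mem i)) i
        rwa [mul_assoc, S_mul_self hR, mul_one] at this
      have hlent : R.len (R.wordProd t) ≤ n := by omega
      have hih := ih (R.wordProd t) htW hlent
      have hxe : w₀ * x = (w₀ * R.wordProd t) * R.S i := by
        rw [← hx₁, mul_assoc]
      rw [hxe]
      omega

lemma longest_inv (hR : R.IsRootSystem) {w₀ : R.Aut} (h₀ : R.IsLongest w₀) :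
    R.IsLongest w₀⁻¹ := by
  refine ⟨inv_mem h₀.1, fun g hg => ?_⟩
  rw [len_inv hR h₀.1]
  exact h₀.2 g hg

lemma longest_right_mul (hR : R.IsRootSystem) {w₀ : R.Aut} (h₀ : R.IsLongest w₀)
    {v : R.Aut} (hv : v ∈ R.weylGroup) :
    R.len (v * w₀) + R.len v = R.len w₀ := by
  have h₀i := longest_inv hR h₀
  have h1 : R.len (v * w₀) = R.len (w₀⁻¹ * v⁻¹) := by
    rw [← mul_inv_rev, len_inv hR (mul_mem hv h₀.1)]
  have h2 := longest_mul_len hR h₀i (R.len v⁻¹) v⁻¹ (inv_mem hv) (le_refl _)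
  rw [len_inv hR hv] at h2
  rw [h1]
  rw [len_inv hR h₀.1] at h2
  exact h2

end RootData

theorem statement10 (R : RootData) (hR : R.IsRootSystem)
    (w : R.Aut) (hw : w ∈ R.weylGroup) :
    (∀ v : R.Aut, v ∈ R.weylGroup → R.BruhatLE (v * R.dmul v⁻¹ w) w) ∧
      ∀ w₀ : R.Aut, R.IsLongest w₀ → ∀ v : R.Aut, v ∈ R.weylGroup →
        R.BruhatLE v w → (v * w₀) * R.dmul (v * w₀)⁻¹ w = v := by
  constructor
  · intro v hv
    have hvi : v⁻¹ ∈ R.weylGroup := inv_mem hv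
    have hEx : ∃ l : List (Fin R.r), R.Reduced l ∧ R.wordProd l = v⁻¹ := by
      obtain ⟨l, hred, hl, _⟩ := RootData.exists_reduced hR hvi
      exact ⟨l, hred, hl⟩
    rw [RootData.dmul, dif_pos hEx]
    obtain ⟨hred, hprod⟩ := hEx.choose_spec
    obtain ⟨w'', heq, hch, _⟩ := RootData.dmul_left_quot hR hEx.choose hred w hw
    rw [heq, hprod, ← mul_assoc, mul_inv_cancel, one_mul]
    exact RootData.bruhatLE_of_ch hR hw hch
  · intro w₀ h₀ v hv hbr
    have hvw₀ : v * w₀ ∈ R.weylGroup := mul_mem hv h₀.1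
    have hu : (v * w₀)⁻¹ ∈ R.weylGroup := inv_mem hvw₀
    have hEx : ∃ l : List (Fin R.r), R.Reduced l ∧ R.wordProd l = (v * w₀)⁻¹ := by
      obtain ⟨l, hred, hl, _⟩ := RootData.exists_reduced hR hu
      exact ⟨l, hred, hl⟩
    rw [RootData.dmul, dif_pos hEx]
    obtain ⟨hred, hprod⟩ := hEx.choose_spec
    have hch : R.Ch v w := RootData.ch_of_bruhatLE hR hbr
    have hWlen : R.len (v * w₀) + R.len v = R.len w₀ :=
      RootData.longest_right_mul hR h₀ hv
    have hplv : R.wordProd hEx.choose * v = w₀⁻¹ := by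
      rw [hprod, mul_inv_rev, mul_assoc, inv_mul_cancel, mul_one]
    have hadd : R.len (R.wordProd hEx.choose * v)
        = R.len (R.wordProd hEx.choose) + R.len v := by
      rw [hplv, hprod, RootData.len_inv hR h₀.1, RootData.len_inv hR hvw₀]
      omega
    have hdom := RootData.dmul_dominates hR hEx.choose hred w hw v hv hch hadd
    rw [hplv] at hdom
    have hDW : R.dmulList hEx.choose w ∈ R.weylGroup := RootData.dmulList_mem hw _
    have hDle : R.len (R.dmulList hEx.choose w) ≤ R.len w₀⁻¹ := by
      rw [RootData.len_inv hR h₀.1]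
      exact h₀.2 _ hDW
    have hDeq : w₀⁻¹ = R.dmulList hEx.choose w := RootData.ch_eq_of_len_le hdom hDle
    rw [← hDeq, mul_inv_cancel_right]
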